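/- Let r, s ∈ P lie in the same block. Then for every block ℬ_λ and every overlap type κ, the sets {t ∈ ℬ_λ : φ̄(r,t) = κ} and {t ∈ ℬ_λ : φ̄(s,t) = κ} have the same cardinality. -/

import Mathlib

open Matrix Finset

abbrev PairIdx (d : ℕ) := {p : Fin d × Fin d // p.1 < p.2}

/-- Pairs `r` and `s` lie in the same block: the unordered pairs of cluster labels coincide. -/
def sameBlock {d K : ℕ} (g : Fin d → Fin K) (r s : PairIdx d) : Prop :=
  (g r.1.1 = g s.1.1 ∧ g r.1.2 = g s.1.2) ∨ (g r.1.1 = g s.1.2 ∧ g r.1.2 = g s.1.1)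

instance {d K : ℕ} (g : Fin d → Fin K) : DecidableRel (sameBlock g) :=
  fun r s => by unfold sameBlock; infer_instance

/-- The overlap type `φ̄(r,s)`: the multiset of cluster labels of the elements of
`{i_r, j_r} ∩ {i_s, j_s}`.  The empty multiset encodes the type `(0,0)`, the singleton
`{k}` encodes `(0,k)`, and the two-element multiset `{k₁,k₂}` encodes
`(min(k₁,k₂), max(k₁,k₂))`. -/
def overlap {d K : ℕ} (g : Fin d → Fin K) (r s : PairIdx d) : Multiset (Fin K) :=
  (({r.1.1, r.1.2} ∩ {s.1.1, s.1.2} : Finset (Fin d)).val.map g)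

/-- The cardinality of the block containing `r`. -/
def blockCard {d K : ℕ} (g : Fin d → Fin K) (r : PairIdx d) : ℕ :=
  (Finset.univ.filter (fun t => sameBlock g r t)).card

/-- The blockwise-averaging matrix `Γ`. -/
noncomputable def Gamma {d K : ℕ} (g : Fin d → Fin K) :
    Matrix (PairIdx d) (PairIdx d) ℝ :=
  Matrix.of fun r s => if sameBlock g r s then (1 : ℝ) / (blockCard g r) else 0

/-- Membership in the class `𝒮_𝒢`. -/
def inSG {d K : ℕ} (g : Fin d → Fin K) (S : Matrix (PairIdx d) (PairIdx d) ℝ) : Prop :=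
  S.IsSymm ∧ ∀ r r' s s' : PairIdx d, sameBlock g r r' → sameBlock g s s' →
    overlap g r s = overlap g r' s' → S r s = S r' s'

/-! ### Auxiliary material -/

/-- The unordered pair of a `PairIdx` as a finset. -/
def pairSet {d : ℕ} (t : PairIdx d) : Finset (Fin d) := {t.1.1, t.1.2}

lemma overlap_eq {d K : ℕ} (g : Fin d → Fin K) (r s : PairIdx d) :
    overlap g r s = ((pairSet r ∩ pairSet s).val.map g) := rfl

/-- An ordered pair is determined by its underlying unordered pair. -/
lemma eq_of_pairSet {d : ℕ} {u v : PairIdx d} (h : pairSet u = pairSet v) : u = v := by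
  obtain ⟨⟨a, b⟩, hab⟩ := u
  obtain ⟨⟨c, e⟩, hce⟩ := v
  simp only [pairSet] at h
  have h1 : a ∈ ({c, e} : Finset (Fin d)) := h ▸ (by simp)
  have h2 : b ∈ ({c, e} : Finset (Fin d)) := h ▸ (by simp)
  have h3 : c ∈ ({a, b} : Finset (Fin d)) := h ▸ (by simp)
  have h4 : e ∈ ({a, b} : Finset (Fin d)) := h ▸ (by simp)
  simp only [Finset.mem_insert, Finset.mem_singleton] at h1 h2 h3 h4
  simp only [Subtype.mk.injEq, Prod.mk.injEq]
  simp only [Fin.lt_def] at hab hce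
  rcases h1 with h1 | h1 <;> rcases h2 with h2 | h2 <;>
    [skip; skip; skip; skip] <;>
    first
      | (exact ⟨h1, h2⟩)
      | (exfalso; rcases h3 with h3 | h3 <;> rcases h4 with h4 | h4 <;> subst_vars <;> omega)

/-- Extend a cluster-preserving assignment on two points to a cluster-preserving
permutation. -/
lemma exists_perm {d K : ℕ} (g : Fin d → Fin K) {a b a' b' : Fin d}
    (hab : a ≠ b) (hab' : a' ≠ b') (ha : g a = g a') (hb : g b = g b') :
    ∃ σ : Equiv.Perm (Fin d), (∀ x, g (σ x) = g x) ∧ σ a = a' ∧ σ b = b' := by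
  classical
  set e := Equiv.swap a a' with he
  have hea : e a = a' := Equiv.swap_apply_left a a'
  have heb : e b ≠ a' := by
    intro h
    exact hab (e.injective (h.trans hea.symm)).symm
  have hge : ∀ x, g (e x) = g x := by
    intro x
    by_cases h1 : x = a
    · simp [he, h1, ha]
    · by_cases h2 : x = a'
      · simp [he, h2, ha]
      · rw [he, Equiv.swap_apply_of_ne_of_ne h1 h2]
  refine ⟨e.trans (Equiv.swap b' (e b)), ?_, ?_, ?_⟩
  · intro x
    simp only [Equiv.trans_apply]
    by_cases h1 : e x = b'
    · rw [h1, Equiv.swap_apply_left, hge b, hb, ← h1, hge]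
    · by_cases h2 : e x = e b
      · rw [h2, Equiv.swap_apply_right, ← hb, ← hge b, ← h2, hge]
      · rw [Equiv.swap_apply_of_ne_of_ne h1 h2, hge]
  · simp only [Equiv.trans_apply, hea]
    exact Equiv.swap_apply_of_ne_of_ne hab' heb.symm
  · simp only [Equiv.trans_apply, Equiv.swap_apply_right]

/-- Transport a pair along a permutation, re-sorting the components. -/
def Phi {d : ℕ} (σ : Equiv.Perm (Fin d)) (t : PairIdx d) : PairIdx d :=
  if h : σ t.1.1 < σ t.1.2 then ⟨(σ t.1.1, σ t.1.2), h⟩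
  else ⟨(σ t.1.2, σ t.1.1), by
    have hne : σ t.1.1 ≠ σ t.1.2 := fun he => absurd (σ.injective he) t.2.ne
    exact lt_of_le_of_ne (not_lt.mp h) hne.symm⟩

lemma pairSet_Phi {d : ℕ} (σ : Equiv.Perm (Fin d)) (t : PairIdx d) :
    pairSet (Phi σ t) = (pairSet t).map σ.toEmbedding := by
  unfold Phi pairSet
  split <;> simp [Finset.map_insert, Finset.pair_comm]

lemma sameBlock_Phi {d K : ℕ} (g : Fin d → Fin K) (σ : Equiv.Perm (Fin d))
    (hσ : ∀ x, g (σ x) = g x) (t₀ t : PairIdx d) :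
    sameBlock g t₀ (Phi σ t) ↔ sameBlock g t₀ t := by
  unfold Phi
  split <;> simp only [sameBlock, hσ] <;> tauto

lemma overlap_Phi {d K : ℕ} (g : Fin d → Fin K) (σ : Equiv.Perm (Fin d))
    (hσ : ∀ x, g (σ x) = g x) {r s : PairIdx d}
    (hmap : (pairSet r).map σ.toEmbedding = pairSet s) (t : PairIdx d) :
    overlap g s (Phi σ t) = overlap g r t := by
  classical
  rw [overlap_eq, overlap_eq, pairSet_Phi, ← hmap, ← Finset.map_inter, Finset.map_val,
    Multiset.map_map]
  exact Multiset.map_congr rfl fun x _ => hσ x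

lemma Phi_inv {d : ℕ} (σ : Equiv.Perm (Fin d)) (t : PairIdx d) :
    Phi σ⁻¹ (Phi σ t) = t := by
  apply eq_of_pairSet
  rw [pairSet_Phi, pairSet_Phi, Finset.map_map]
  ext x
  simp

/-- The key bijection argument. -/
lemma key {d K : ℕ} (g : Fin d → Fin K) (σ : Equiv.Perm (Fin d))
    (hσ : ∀ x, g (σ x) = g x) (r s : PairIdx d)
    (hmap : (pairSet r).map σ.toEmbedding = pairSet s)
    (t₀ : PairIdx d) (κ : Multiset (Fin K)) :
    (Finset.univ.filter (fun t => sameBlock g t₀ t ∧ overlap g r t = κ)).card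
      = (Finset.univ.filter (fun t => sameBlock g t₀ t ∧ overlap g s t = κ)).card := by
  have hσ' : ∀ x, g (σ⁻¹ x) = g x := fun x =>
    (hσ (σ⁻¹ x)).symm.trans (congrArg g (Equiv.apply_symm_apply σ x))
  have hmap' : (pairSet s).map σ⁻¹.toEmbedding = pairSet r := by
    rw [← hmap, Finset.map_map]
    ext x; simp
  refine Finset.card_bij' (fun t _ => Phi σ t) (fun t _ => Phi σ⁻¹ t) ?_ ?_ ?_ ?_
  · intro t ht
    simp only [Finset.mem_filter, Finset.mem_univ, true_and] at ht ⊢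
    exact ⟨(sameBlock_Phi g σ hσ t₀ t).mpr ht.1, (overlap_Phi g σ hσ hmap t).trans ht.2⟩
  · intro t ht
    simp only [Finset.mem_filter, Finset.mem_univ, true_and] at ht ⊢
    exact ⟨(sameBlock_Phi g σ⁻¹ hσ' t₀ t).mpr ht.1,
      (overlap_Phi g σ⁻¹ hσ' hmap' t).trans ht.2⟩
  · intro t _; exact Phi_inv σ t
  · intro t _
    have := Phi_inv σ⁻¹ t
    rwa [inv_inv] at this
  
/-- If `r` and `s` lie in the same block, then for every block (represented
by any of its elements `t₀`) and every overlap type `κ`, the sets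
`{t ∈ ℬ_λ : φ̄(r,t) = κ}` and `{t ∈ ℬ_λ : φ̄(s,t) = κ}` have the same cardinality. -/
theorem statement_8 {d K : ℕ} (hd : 2 ≤ d) (hK : 1 ≤ K)
    (g : Fin d → Fin K) (hg : Function.Surjective g)
    (r s : PairIdx d) (hrs : sameBlock g r s)
    (t₀ : PairIdx d) (κ : Multiset (Fin K)) :
    (Finset.univ.filter (fun t => sameBlock g t₀ t ∧ overlap g r t = κ)).card
      = (Finset.univ.filter (fun t => sameBlock g t₀ t ∧ overlap g s t = κ)).card := by
  rcases hrs with ⟨h1, h2⟩ | ⟨h1, h2⟩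
  · obtain ⟨σ, hσ, ha, hb⟩ := exists_perm g r.2.ne s.2.ne h1 h2
    exact key g σ hσ r s (by simp [pairSet, Finset.map_insert, ha, hb]) t₀ κ
  · obtain ⟨σ, hσ, ha, hb⟩ := exists_perm g r.2.ne s.2.ne.symm h1 h2
    exact key g σ hσ r s
      (by simp [pairSet, Finset.map_insert, ha, hb, Finset.pair_comm]) t₀ κ
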